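/- Let H be a real inner product space, and let W and V be finite-dimensional linear subspaces of H with dim W = dim V and W ≠ {0}. Let α > 0 be such that for every nonzero w ∈ W there exists a nonzero v ∈ V with |⟨w, v⟩| ≥ α‖w‖‖v‖. Let u ∈ H and let u_h ∈ W satisfy ⟨u − u_h, v⟩ = 0 for all v ∈ V. Then for every w ∈ W one has ‖u − u_h‖ ≤ α⁻¹‖u − w‖. -/

import Mathlib

open RealInnerProductSpace

/-- Sharpened quasi-optimality in inner product spaces (used in Corollary 3.1): if the inner
product satisfies the inf-sup condition with constant `α > 0` on finite-dimensional subspaces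
`W, V` of equal dimension with `W ≠ {0}`, and `u_h ∈ W` satisfies the Galerkin relation
`⟨u − u_h, v⟩ = 0` for all `v ∈ V`, then `‖u − u_h‖ ≤ α⁻¹‖u − w‖` for every `w ∈ W`. -/

private lemma quasi_opt_alg {α E t a db X : ℝ} (hα : 0 < α) (hα1 : α ≤ 1)
    (hX : X ^ 2 = db ^ 2 + a ^ 2) (htri : (E - t) ^ 2 ≤ db ^ 2) (ht : 0 ≤ t)
    (ha2 : α ^ 2 * (a ^ 2 + t ^ 2) ≤ a ^ 2) : α ^ 2 * E ^ 2 ≤ X ^ 2 := by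
  rcases lt_or_eq_of_le hα1 with hlt | heq
  · have h1α : 0 < 1 - α ^ 2 := by nlinarith
    nlinarith [sq_nonneg (t - (1 - α ^ 2) * E), mul_nonneg h1α.le (sub_nonneg.mpr htri)]
  · subst heq
    have h1 : t ^ 2 ≤ 0 := by nlinarith
    have ht0 : t = 0 := le_antisymm (by nlinarith) ht
    rw [ht0] at htri
    nlinarith [sq_nonneg a]

theorem galerkin_quasi_optimality_inner {H : Type*}
    [NormedAddCommGroup H] [InnerProductSpace ℝ H]
    (W V : Submodule ℝ H) [FiniteDimensional ℝ W] [FiniteDimensional ℝ V]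
    (hdim : Module.finrank ℝ W = Module.finrank ℝ V) (hW : W ≠ ⊥)
    (α : ℝ) (hα : 0 < α)
    (hinfsup : ∀ w ∈ W, w ≠ 0 → ∃ v ∈ V, v ≠ 0 ∧ |⟪w, v⟫| ≥ α * ‖w‖ * ‖v‖)
    (u uh : H) (huh : uh ∈ W)
    (hgalerkin : ∀ v ∈ V, ⟪u - uh, v⟫ = 0) :
    ∀ w ∈ W, ‖u - uh‖ ≤ α⁻¹ * ‖u - w‖ := by
  intro w hw
  set e := u - uh with he_def
  have hmW : w - uh ∈ W := W.sub_mem hw huh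
  set m := w - uh with hm_def
  have hx : u - w = e - m := by rw [he_def, hm_def]; abel
  -- α ≤ 1
  have hα1 : α ≤ 1 := by
    obtain ⟨w0, hw0W, hw0⟩ := Submodule.exists_mem_ne_zero_of_ne_bot hW
    obtain ⟨v0, hv0V, hv0, hb⟩ := hinfsup w0 hw0W hw0
    have h1 := abs_real_inner_le_norm w0 v0
    have hpos : 0 < ‖w0‖ * ‖v0‖ := by
      have h2 := norm_pos_iff.mpr hw0
      have h3 := norm_pos_iff.mpr hv0
      positivity
    nlinarith [hb, h1]
  have hinv1 : 1 ≤ α⁻¹ := by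
    have hi : α * α⁻¹ = 1 := mul_inv_cancel₀ hα.ne'
    nlinarith [inv_pos.mpr hα, hα1]
  by_cases hm : m = 0
  · have hweq : u - w = e := by
      have h0 : w = uh := sub_eq_zero.mp hm
      rw [h0]
    rw [hweq]
    nlinarith [norm_nonneg e, hinv1]
  · -- main case
    set p : H := (V.orthogonalProjectionOnto m : H) with hp_def
    set b : H := m - p with hb_def
    have hpV : p ∈ V := (V.orthogonalProjectionOnto m).2
    have hbV : b ∈ Vᗮ := Submodule.sub_starProjection_mem_orthogonal (K := V) m
    have heV : e ∈ Vᗮ := by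
      rw [Submodule.mem_orthogonal]
      intro v hv
      rw [real_inner_comm]
      exact hgalerkin v hv
    have hmpb : m = p + b := by rw [hb_def]; abel
    have hpb : ⟪p, b⟫ = 0 := hbV p hpV
    -- inf-sup gives α‖m‖ ≤ ‖p‖
    obtain ⟨v, hvV, hv, hiv⟩ := hinfsup m hmW hm
    have hmv : ⟪m, v⟫ = ⟪p, v⟫ := by
      have hb0 : ⟪b, v⟫ = 0 := by rw [real_inner_comm]; exact hbV v hvV
      rw [hmpb, inner_add_left, hb0, add_zero]
    have hap : α * ‖m‖ ≤ ‖p‖ := by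
      have h1 : |⟪p, v⟫| ≤ ‖p‖ * ‖v‖ := abs_real_inner_le_norm p v
      have hvpos : 0 < ‖v‖ := norm_pos_iff.mpr hv
      rw [hmv] at hiv
      nlinarith [hiv, h1, hvpos]
    -- Pythagoras: ‖m‖² = ‖p‖² + ‖b‖²
    have hmsq : ‖m‖ ^ 2 = ‖p‖ ^ 2 + ‖b‖ ^ 2 := by
      rw [hmpb, norm_add_sq_real, hpb]; ring
    -- ‖e - m‖² = ‖e - b‖² + ‖p‖²
    have hebp : ⟪e - b, p⟫ = 0 := by
      have h1 : ⟪e, p⟫ = 0 := by rw [real_inner_comm]; exact heV p hpV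
      have h2 : ⟪b, p⟫ = 0 := by rw [real_inner_comm]; exact hpb
      rw [inner_sub_left, h1, h2, sub_zero]
    have hXsq : ‖e - m‖ ^ 2 = ‖e - b‖ ^ 2 + ‖p‖ ^ 2 := by
      have hemb : e - m = (e - b) - p := by rw [hb_def]; abel
      rw [hemb, norm_sub_sq_real, hebp]; ring
    -- reverse triangle
    have htri : (‖e‖ - ‖b‖) ^ 2 ≤ ‖e - b‖ ^ 2 := by
      calc (‖e‖ - ‖b‖) ^ 2 = |‖e‖ - ‖b‖| ^ 2 := (sq_abs _).symm
        _ ≤ ‖e - b‖ ^ 2 := by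
            apply pow_le_pow_left₀ (abs_nonneg _) (abs_norm_sub_norm_le e b)
    -- square the inf-sup bound
    have ha2 : α ^ 2 * (‖p‖ ^ 2 + ‖b‖ ^ 2) ≤ ‖p‖ ^ 2 := by
      have hmn : 0 ≤ ‖m‖ := norm_nonneg m
      nlinarith [hap, hmn, norm_nonneg p, mul_nonneg hα.le hmn]
    have ha2' : α ^ 2 * (‖p‖ ^ 2 + ‖b‖ ^ 2) ≤ ‖p‖ ^ 2 := ha2
    -- key algebra: ‖e - m‖² ≥ α²‖e‖²
    have hkey : α ^ 2 * ‖e‖ ^ 2 ≤ ‖e - m‖ ^ 2 :=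
      quasi_opt_alg hα hα1 hXsq htri (norm_nonneg b) (by linarith [ha2'])
    -- conclude
    have hfin : α * ‖e‖ ≤ ‖e - m‖ := by
      nlinarith [hkey, norm_nonneg (e - m), norm_nonneg e, mul_nonneg hα.le (norm_nonneg e)]
    rw [hx]
    calc ‖e‖ = α⁻¹ * (α * ‖e‖) := by field_simp
      _ ≤ α⁻¹ * ‖e - m‖ := mul_le_mul_of_nonneg_left hfin (inv_pos.mpr hα).le
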